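/- Let d : ℕ → ℝ be a real sequence and define t(n,k) = Σ_{i=k}^{n} d_i·C(i,k) for 0 ≤ k ≤ n and t(n,k) = 0 for k > n. Then the following are equivalent: (a) for every real sequence x with (Ax)_n → 0, the partial sums Σ_{k=0}^{n} d_k·x_k converge as n → ∞; (b) sup_n Σ_{k=0}^{n} |t(n,k)| < ∞ and for each k the limit lim_{n→∞} t(n,k) exists. In other words, d belongs to the β-dual of the space {x : Ax ∈ c₀} exactly under condition (b). -/

import Mathlib

open Filter Topology

open ZeroAtInfty

/-- `λ_{k−1}` with the convention `λ_{−1} := 0`. -/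
noncomputable def lamPrev (lam : ℕ → ℝ) (k : ℕ) : ℝ := if k = 0 then 0 else lam (k - 1)

/-- Entries of the product matrix `A = Λ(B^{r,s}(Δ^{α̃}))`:
`A(n,k) = Σ_{i=k}^{n} ((λ_i − λ_{i−1})/λ_n)·(1/(s+r)^n)·C(n,i)·s^{n−i}·r^{i}·
(−1)^{i−k}·Γ(α̃+1)/((i−k)!·Γ(α̃−i+k+1))` for `k ≤ n` and `0` for `k > n`
(the `Finset.Icc k n` sum is empty when `k > n`). -/
noncomputable def Amat (r s α : ℝ) (lam : ℕ → ℝ) (n k : ℕ) : ℝ :=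
  ∑ i ∈ Finset.Icc k n,
    ((lam i - lamPrev lam i) / lam n) * (1 / (s + r) ^ n) * (n.choose i : ℝ) *
      s ^ (n - i) * r ^ i * (-1 : ℝ) ^ (i - k) *
      (Real.Gamma (α + 1) /
        ((Nat.factorial (i - k) : ℝ) * Real.Gamma (α - (i : ℝ) + (k : ℝ) + 1)))

/-- The `A`-transform of a real sequence `x`: `(Ax)_n = Σ_{k=0}^{n} A(n,k)·x_k`. -/
noncomputable def Atr (r s α : ℝ) (lam : ℕ → ℝ) (x : ℕ → ℝ) (n : ℕ) : ℝ :=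
  ∑ k ∈ Finset.range (n + 1), Amat r s α lam n k * x k

/-- `t(n,k) = Σ_{i=k}^{n} d_i·C(i,k)` for `k ≤ n` and `0` for `k > n`
(the `Finset.Icc k n` sum is empty when `k > n`). -/
noncomputable def tmat (d : ℕ → ℝ) (C : ℕ → ℕ → ℝ) (n k : ℕ) : ℝ :=
  ∑ i ∈ Finset.Icc k n, d i * C i k


noncomputable def seqC0 (y : ℕ → ℝ) (hy : Tendsto y atTop (nhds 0)) : C₀(ℕ, ℝ) where
  toFun := y
  continuous_toFun := continuous_of_discreteTopology
  zero_at_infty' := by rwa [cocompact_eq_cofinite, Nat.cofinite_eq_atTop]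

@[simp] lemma seqC0_apply (y : ℕ → ℝ) (hy) (k : ℕ) : seqC0 y hy k = y k := rfl

lemma c0_tendsto (f : C₀(ℕ, ℝ)) : Tendsto (fun k => f k) atTop (nhds 0) := by
  have := zero_at_infty f
  rwa [cocompact_eq_cofinite, Nat.cofinite_eq_atTop] at this

lemma c0_abs_apply_le_norm (f : C₀(ℕ, ℝ)) (k : ℕ) : |f k| ≤ ‖f‖ := by
  have := f.toBCF.norm_coe_le_norm k
  rwa [ZeroAtInftyContinuousMap.norm_toBCF_eq_norm] at this

noncomputable def rowFunc (T : ℕ → ℕ → ℝ) (n : ℕ) : C₀(ℕ, ℝ) →L[ℝ] ℝ :=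
  LinearMap.mkContinuous
    { toFun := fun f => ∑ k ∈ Finset.range (n+1), T n k * f k
      map_add' := by
        intro f g
        simp [mul_add, Finset.sum_add_distrib]
      map_smul' := by
        intro c f
        simp only [ZeroAtInftyContinuousMap.coe_smul, Pi.smul_apply, smul_eq_mul,
          RingHom.id_apply, Finset.mul_sum]
        exact Finset.sum_congr rfl (fun k _ => by ring) }
    (∑ k ∈ Finset.range (n+1), |T n k|)
    (by
      intro f
      simp only [LinearMap.coe_mk, AddHom.coe_mk, Real.norm_eq_abs]
      calc |∑ k ∈ Finset.range (n+1), T n k * f k|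
          ≤ ∑ k ∈ Finset.range (n+1), |T n k * f k| := Finset.abs_sum_le_sum_abs _ _
        _ ≤ ∑ k ∈ Finset.range (n+1), |T n k| * ‖f‖ := by
            refine Finset.sum_le_sum fun k _ => ?_
            rw [abs_mul]
            exact mul_le_mul_of_nonneg_left (c0_abs_apply_le_norm f k) (abs_nonneg _)
        _ = (∑ k ∈ Finset.range (n+1), |T n k|) * ‖f‖ := by rw [Finset.sum_mul])

@[simp] lemma rowFunc_apply (T : ℕ → ℕ → ℝ) (n : ℕ) (f : C₀(ℕ, ℝ)) :
    rowFunc T n f = ∑ k ∈ Finset.range (n+1), T n k * f k := rfl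

/-- Banach–Steinhaus step: pointwise convergence of the transforms on c₀ forces
uniformly bounded row ℓ¹-norms. -/
lemma toeplitz_bound (T : ℕ → ℕ → ℝ)
    (h : ∀ y : ℕ → ℝ, Tendsto y atTop (nhds 0) →
        ∃ l, Tendsto (fun n => ∑ k ∈ Finset.range (n+1), T n k * y k) atTop (nhds l)) :
    ∃ M, ∀ n, (∑ k ∈ Finset.range (n+1), |T n k|) ≤ M := by
  have hpt : ∀ f : C₀(ℕ, ℝ), ∃ Cb, ∀ n, ‖rowFunc T n f‖ ≤ Cb := by
    intro f
    obtain ⟨l, hl⟩ := h (fun k => f k) (c0_tendsto f)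
    have habs : Tendsto (fun n => |∑ k ∈ Finset.range (n+1), T n k * f k|) atTop
        (nhds |l|) := hl.abs
    obtain ⟨Cb, hCb⟩ := habs.bddAbove_range
    exact ⟨Cb, fun n => hCb ⟨n, rfl⟩⟩
  obtain ⟨M, hM⟩ := banach_steinhaus hpt
  refine ⟨M, fun n => ?_⟩
  set y : ℕ → ℝ := fun j => if j ≤ n then (if T n j < 0 then (-1 : ℝ) else 1) else 0 with hy
  have hy0 : Tendsto y atTop (nhds 0) := by
    apply Tendsto.congr' _ tendsto_const_nhds
    filter_upwards [eventually_ge_atTop (n+1)] with j hj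
    simp [hy, Nat.not_le.mpr (by omega : n < j)]
  set f : C₀(ℕ, ℝ) := seqC0 y hy0 with hf
  have hnorm : ‖f‖ ≤ 1 := by
    rw [← ZeroAtInftyContinuousMap.norm_toBCF_eq_norm]
    refine BoundedContinuousFunction.norm_le zero_le_one |>.mpr fun j => ?_
    simp only [Real.norm_eq_abs]
    show |y j| ≤ 1
    by_cases hj : j ≤ n <;> by_cases hneg : T n j < 0 <;> simp [hy, hj, hneg]
  have hval : rowFunc T n f = ∑ k ∈ Finset.range (n+1), |T n k| := by
    rw [rowFunc_apply]
    refine Finset.sum_congr rfl fun k hk => ?_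
    have hk' : k ≤ n := Nat.lt_succ_iff.mp (Finset.mem_range.mp hk)
    show T n k * y k = |T n k|
    by_cases hneg : T n k < 0
    · simp [hy, hk', hneg, abs_of_neg hneg]
    · simp [hy, hk', hneg, abs_of_nonneg (not_lt.mp hneg)]
  calc (∑ k ∈ Finset.range (n+1), |T n k|) = rowFunc T n f := hval.symm
    _ ≤ |rowFunc T n f| := le_abs_self _
    _ ≤ ‖rowFunc T n‖ * ‖f‖ := (rowFunc T n).le_opNorm f
    _ ≤ M * 1 := mul_le_mul (hM n) hnorm (norm_nonneg _) ((norm_nonneg _).trans (hM n))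
    _ = M := mul_one M

lemma toeplitz_col (T : ℕ → ℕ → ℝ) (hT : ∀ n k, n < k → T n k = 0)
    (h : ∀ y : ℕ → ℝ, Tendsto y atTop (nhds 0) →
        ∃ l, Tendsto (fun n => ∑ k ∈ Finset.range (n+1), T n k * y k) atTop (nhds l)) :
    ∀ k, ∃ l, Tendsto (fun n => T n k) atTop (nhds l) := by
  intro k
  set y : ℕ → ℝ := fun j => if j = k then 1 else 0 with hy
  have hy0 : Tendsto y atTop (nhds 0) := by
    apply Tendsto.congr' _ tendsto_const_nhds
    filter_upwards [eventually_ge_atTop (k+1)] with j hj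
    have : j ≠ k := by omega
    simp [hy, this]
  obtain ⟨l, hl⟩ := h y hy0
  refine ⟨l, hl.congr fun n => ?_⟩
  have : (∑ j ∈ Finset.range (n+1), T n j * y j)
      = ∑ j ∈ Finset.range (n+1), (if j = k then T n j else 0) := by
    refine Finset.sum_congr rfl fun j _ => ?_
    by_cases hj : j = k <;> simp [hy, hj]
  rw [this, Finset.sum_ite_eq' (Finset.range (n+1)) k (fun j => T n j)]
  by_cases hk : k ∈ Finset.range (n+1)
  · simp [hk]
  · have hnk : n < k := by
      simp only [Finset.mem_range] at hk; omega
    simp [hk, hT n k hnk]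

lemma toeplitz_backward (T : ℕ → ℕ → ℝ)
    (M : ℝ) (hM : ∀ n, (∑ k ∈ Finset.range (n+1), |T n k|) ≤ M)
    (l : ℕ → ℝ) (hl : ∀ k, Tendsto (fun n => T n k) atTop (nhds (l k)))
    (y : ℕ → ℝ) (hy : Tendsto y atTop (nhds 0)) :
    ∃ L, Tendsto (fun n => ∑ k ∈ Finset.range (n+1), T n k * y k) atTop (nhds L) := by
  have hM0 : 0 ≤ M := le_trans (by positivity) (hM 0)
  -- the column limits are absolutely summable
  have habsl : Summable fun k => |l k| := by
    refine summable_of_sum_range_le (c := M) (fun k => abs_nonneg _) fun J => ?_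
    have htend : Tendsto (fun m => ∑ k ∈ Finset.range J, |T m k|) atTop
        (nhds (∑ k ∈ Finset.range J, |l k|)) :=
      tendsto_finset_sum _ fun k _ => (hl k).abs
    refine le_of_tendsto htend ?_
    filter_upwards [eventually_ge_atTop J] with m hm
    calc (∑ k ∈ Finset.range J, |T m k|)
        ≤ ∑ k ∈ Finset.range (m+1), |T m k| :=
          Finset.sum_le_sum_of_subset_of_nonneg
            (Finset.range_subset_range.mpr (by omega)) (fun k _ _ => abs_nonneg _)
      _ ≤ M := hM m
  -- y is bounded
  have hyabs : Tendsto (fun k => |y k|) atTop (nhds 0) := by simpa using hy.abs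
  obtain ⟨B, hB⟩ := hyabs.bddAbove_range
  have hB' : ∀ k, |y k| ≤ B := fun k => hB ⟨k, rfl⟩
  have hsum : Summable fun k => l k * y k := by
    apply Summable.of_abs
    refine Summable.of_nonneg_of_le (fun k => abs_nonneg _) (fun k => ?_) (habsl.mul_right B)
    rw [abs_mul]
    exact mul_le_mul_of_nonneg_left (hB' k) (abs_nonneg _)
  refine ⟨∑' k, l k * y k, ?_⟩
  set L := ∑' k, l k * y k with hL
  rw [Metric.tendsto_atTop]
  intro ε hε
  have hε3 : 0 < ε / 3 := by linarith
  have hεM : 0 < ε / 3 / (M + 1) := by positivity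
  -- choose J
  obtain ⟨J₁, hJ₁⟩ := (Metric.tendsto_atTop.mp hsum.hasSum.tendsto_sum_nat) (ε/3) hε3
  obtain ⟨J₂, hJ₂⟩ := (Metric.tendsto_atTop.mp hy) (ε / 3 / (M + 1)) hεM
  set J := max J₁ J₂ with hJdef
  -- choose N for the finitely many columns
  have hcol : Tendsto (fun n => ∑ k ∈ Finset.range J, |T n k - l k| * |y k|) atTop (nhds 0) := by
    have : Tendsto (fun n => ∑ k ∈ Finset.range J, |T n k - l k| * |y k|) atTop
        (nhds (∑ k ∈ Finset.range J, (0 : ℝ))) := by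
      refine tendsto_finset_sum _ fun k _ => ?_
      have h1 : Tendsto (fun n => T n k - l k) atTop (nhds 0) := by
        simpa using (hl k).sub_const (l k)
      simpa using (h1.abs.mul_const |y k|)
    simpa using this
  obtain ⟨N₀, hN₀⟩ := (Metric.tendsto_atTop.mp hcol) (ε/3) hε3
  refine ⟨max N₀ J, fun n hn => ?_⟩
  have hnN₀ : N₀ ≤ n := le_trans (le_max_left _ _) hn
  have hnJ : J ≤ n := le_trans (le_max_right _ _) hn
  have hJn1 : J ≤ n + 1 := by omega
  -- decompose
  have hsplit : (∑ k ∈ Finset.range (n+1), T n k * y k)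
      = (∑ k ∈ Finset.range J, T n k * y k) + ∑ k ∈ Finset.Ico J (n+1), T n k * y k :=
    (Finset.sum_range_add_sum_Ico _ hJn1).symm
  have hA : |∑ k ∈ Finset.range J, (T n k - l k) * y k| < ε/3 := by
    calc |∑ k ∈ Finset.range J, (T n k - l k) * y k|
        ≤ ∑ k ∈ Finset.range J, |(T n k - l k) * y k| := Finset.abs_sum_le_sum_abs _ _
      _ = ∑ k ∈ Finset.range J, |T n k - l k| * |y k| := by
          refine Finset.sum_congr rfl fun k _ => abs_mul _ _
      _ < ε/3 := by
          have := hN₀ n hnN₀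
          rw [Real.dist_eq, sub_zero] at this
          rwa [abs_of_nonneg (Finset.sum_nonneg fun k _ => by positivity)] at this
  have hBt : |∑ k ∈ Finset.Ico J (n+1), T n k * y k| ≤ ε/3 := by
    calc |∑ k ∈ Finset.Ico J (n+1), T n k * y k|
        ≤ ∑ k ∈ Finset.Ico J (n+1), |T n k| * |y k| := by
          refine le_trans (Finset.abs_sum_le_sum_abs _ _) ?_
          exact le_of_eq (Finset.sum_congr rfl fun k _ => abs_mul _ _)
      _ ≤ ∑ k ∈ Finset.Ico J (n+1), |T n k| * (ε / 3 / (M + 1)) := by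
          refine Finset.sum_le_sum fun k hk => ?_
          have hkJ : J₂ ≤ k := le_trans (le_max_right _ _) (Finset.mem_Ico.mp hk).1
          have := hJ₂ k hkJ
          rw [Real.dist_eq, sub_zero] at this
          exact mul_le_mul_of_nonneg_left this.le (abs_nonneg _)
      _ = (∑ k ∈ Finset.Ico J (n+1), |T n k|) * (ε / 3 / (M + 1)) := by
          rw [Finset.sum_mul]
      _ ≤ M * (ε / 3 / (M + 1)) := by
          refine mul_le_mul_of_nonneg_right ?_ hεM.le
          calc (∑ k ∈ Finset.Ico J (n+1), |T n k|)
              ≤ ∑ k ∈ Finset.range (n+1), |T n k| := by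
                refine Finset.sum_le_sum_of_subset_of_nonneg ?_ (fun k _ _ => abs_nonneg _)
                rw [Finset.range_eq_Ico]
                exact Finset.Ico_subset_Ico (by omega) le_rfl
            _ ≤ M := hM n
      _ ≤ ε/3 := by
          have h2 : M / (M + 1) ≤ 1 := div_le_one_of_le₀ (by linarith) (by linarith)
          calc M * (ε / 3 / (M + 1)) = ε / 3 * (M / (M + 1)) := by ring
            _ ≤ ε / 3 * 1 := mul_le_mul_of_nonneg_left h2 hε3.le
            _ = ε / 3 := mul_one _
  have hC : |(∑ k ∈ Finset.range J, l k * y k) - L| < ε/3 := by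
    have := hJ₁ J (le_max_left _ _)
    rwa [Real.dist_eq] at this
  rw [Real.dist_eq]
  have hid : (∑ k ∈ Finset.range (n+1), T n k * y k) - L
      = (∑ k ∈ Finset.range J, (T n k - l k) * y k)
        + (∑ k ∈ Finset.Ico J (n+1), T n k * y k)
        + ((∑ k ∈ Finset.range J, l k * y k) - L) := by
    rw [hsplit]
    have : (∑ k ∈ Finset.range J, (T n k - l k) * y k)
        = (∑ k ∈ Finset.range J, T n k * y k) - ∑ k ∈ Finset.range J, l k * y k := by
      rw [← Finset.sum_sub_distrib]
      exact Finset.sum_congr rfl fun k _ => by ring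
    rw [this]; ring
  rw [hid]
  calc |_ + _ + _| ≤ |∑ k ∈ Finset.range J, (T n k - l k) * y k|
        + |∑ k ∈ Finset.Ico J (n+1), T n k * y k|
        + |(∑ k ∈ Finset.range J, l k * y k) - L| := abs_add_three _ _ _
    _ < ε := by linarith

lemma Amat_eq_zero (r s α : ℝ) (lam : ℕ → ℝ) {n k : ℕ} (h : n < k) :
    Amat r s α lam n k = 0 := by
  unfold Amat
  rw [Finset.Icc_eq_empty (by omega : ¬ k ≤ n)]
  simp

lemma tmat_eq_zero (d : ℕ → ℝ) (C : ℕ → ℕ → ℝ) {n k : ℕ} (h : n < k) :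
    tmat d C n k = 0 := by
  unfold tmat
  rw [Finset.Icc_eq_empty (by omega : ¬ k ≤ n)]
  simp

theorem beta_dual_c0' (r s α : ℝ) (lam : ℕ → ℝ)
    (C : ℕ → ℕ → ℝ) (hCtri : ∀ n k : ℕ, n < k → C n k = 0)
    (hAC : ∀ n k : ℕ, (∑ i ∈ Finset.range (max n k + 1), Amat r s α lam n i * C i k)
        = if n = k then 1 else 0)
    (hCA : ∀ n k : ℕ, (∑ i ∈ Finset.range (max n k + 1), C n i * Amat r s α lam i k)
        = if n = k then 1 else 0)
    (d : ℕ → ℝ) :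
    (∀ x : ℕ → ℝ, Tendsto (Atr r s α lam x) atTop (nhds 0) →
        ∃ l : ℝ, Tendsto (fun n => ∑ k ∈ Finset.range (n + 1), d k * x k) atTop (nhds l)) ↔
      ((∃ M : ℝ, ∀ n, (∑ k ∈ Finset.range (n + 1), |tmat d C n k|) ≤ M) ∧
        (∀ k, ∃ l : ℝ, Tendsto (fun n => tmat d C n k) atTop (nhds l))) := by
  have hCAd : ∀ j k : ℕ, j ≤ k →
      (∑ i ∈ Finset.range (k+1), C k i * Amat r s α lam i j) = if k = j then 1 else 0 := by
    intro j k hjk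
    have := hCA k j
    rwa [Nat.max_eq_left hjk] at this
  have hACd : ∀ j n : ℕ, j ≤ n →
      (∑ k ∈ Finset.range (n+1), Amat r s α lam n k * C k j) = if n = j then 1 else 0 := by
    intro j n hjn
    have := hAC n j
    rwa [Nat.max_eq_left hjn] at this
  -- recovering x from its transform
  have hxrec : ∀ (x : ℕ → ℝ) (k : ℕ),
      (∑ i ∈ Finset.range (k+1), C k i * Atr r s α lam x i) = x k := by
    intro x k
    calc (∑ i ∈ Finset.range (k+1), C k i * Atr r s α lam x i)
        = ∑ i ∈ Finset.range (k+1), ∑ j ∈ Finset.range (k+1),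
            C k i * (Amat r s α lam i j * x j) := by
          refine Finset.sum_congr rfl fun i hi => ?_
          rw [Atr, Finset.mul_sum]
          refine Finset.sum_subset (Finset.range_subset_range.mpr (by
            have := Finset.mem_range.mp hi; omega)) fun j _ hj => ?_
          have hij : i < j := by
            have := Finset.mem_range.not.mp hj; omega
          rw [Amat_eq_zero r s α lam hij, zero_mul, mul_zero]
      _ = ∑ j ∈ Finset.range (k+1), ∑ i ∈ Finset.range (k+1),
            C k i * (Amat r s α lam i j * x j) := Finset.sum_comm
      _ = ∑ j ∈ Finset.range (k+1),
            (∑ i ∈ Finset.range (k+1), C k i * Amat r s α lam i j) * x j := by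
          refine Finset.sum_congr rfl fun j _ => ?_
          rw [Finset.sum_mul]
          exact Finset.sum_congr rfl fun i _ => by ring
      _ = ∑ j ∈ Finset.range (k+1), (if k = j then 1 else 0) * x j := by
          refine Finset.sum_congr rfl fun j hj => ?_
          rw [hCAd j k (Nat.lt_succ_iff.mp (Finset.mem_range.mp hj))]
      _ = x k := by
          simp only [ite_mul, one_mul, zero_mul, Finset.sum_ite_eq, Finset.mem_range]
          simp [Nat.lt_succ_iff]
  -- the transform of `x := C y` is `y`
  have hAty : ∀ (y : ℕ → ℝ) (n : ℕ),
      Atr r s α lam (fun k => ∑ i ∈ Finset.range (k+1), C k i * y i) n = y n := by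
    intro y n
    calc Atr r s α lam (fun k => ∑ i ∈ Finset.range (k+1), C k i * y i) n
        = ∑ k ∈ Finset.range (n+1), ∑ i ∈ Finset.range (n+1),
            Amat r s α lam n k * (C k i * y i) := by
          rw [Atr]
          refine Finset.sum_congr rfl fun k hk => ?_
          rw [Finset.mul_sum]
          refine Finset.sum_subset (Finset.range_subset_range.mpr (by
            have := Finset.mem_range.mp hk; omega)) fun i _ hi => ?_
          have hki : k < i := by
            have := Finset.mem_range.not.mp hi; omega
          rw [hCtri k i hki, zero_mul, mul_zero]
      _ = ∑ i ∈ Finset.range (n+1), ∑ k ∈ Finset.range (n+1),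
            Amat r s α lam n k * (C k i * y i) := Finset.sum_comm
      _ = ∑ i ∈ Finset.range (n+1),
            (∑ k ∈ Finset.range (n+1), Amat r s α lam n k * C k i) * y i := by
          refine Finset.sum_congr rfl fun i _ => ?_
          rw [Finset.sum_mul]
          exact Finset.sum_congr rfl fun k _ => by ring
      _ = ∑ i ∈ Finset.range (n+1), (if n = i then 1 else 0) * y i := by
          refine Finset.sum_congr rfl fun i hi => ?_
          rw [hACd i n (Nat.lt_succ_iff.mp (Finset.mem_range.mp hi))]
      _ = y n := by
          simp only [ite_mul, one_mul, zero_mul, Finset.sum_ite_eq, Finset.mem_range]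
          simp [Nat.lt_succ_iff]
  -- partial sums identity
  have hpartial : ∀ (x y : ℕ → ℝ),
      (∀ k, x k = ∑ i ∈ Finset.range (k+1), C k i * y i) → ∀ n,
      (∑ k ∈ Finset.range (n+1), d k * x k)
        = ∑ j ∈ Finset.range (n+1), tmat d C n j * y j := by
    intro x y hxy n
    calc (∑ k ∈ Finset.range (n+1), d k * x k)
        = ∑ k ∈ Finset.range (n+1), ∑ j ∈ Finset.range (n+1),
            d k * (C k j * y j) := by
          refine Finset.sum_congr rfl fun k hk => ?_
          rw [hxy k, Finset.mul_sum]
          refine Finset.sum_subset (Finset.range_subset_range.mpr (by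
            have := Finset.mem_range.mp hk; omega)) fun j _ hj => ?_
          have hkj : k < j := by
            have := Finset.mem_range.not.mp hj; omega
          rw [hCtri k j hkj, zero_mul, mul_zero]
      _ = ∑ j ∈ Finset.range (n+1), ∑ k ∈ Finset.range (n+1),
            d k * (C k j * y j) := Finset.sum_comm
      _ = ∑ j ∈ Finset.range (n+1), tmat d C n j * y j := by
          refine Finset.sum_congr rfl fun j hj => ?_
          have hjn : j ≤ n := Nat.lt_succ_iff.mp (Finset.mem_range.mp hj)
          simp only [tmat, Finset.sum_mul]
          rw [show (∑ k ∈ Finset.range (n+1), d k * (C k j * y j))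
              = ∑ k ∈ Finset.range (n+1), d k * C k j * y j from
            Finset.sum_congr rfl fun k _ => by ring]
          refine (Finset.sum_subset (fun k hk => ?_) fun k hk hk' => ?_).symm
          · have := Finset.mem_Icc.mp hk
            exact Finset.mem_range.mpr (by omega)
          · have hkj : k < j := by
              have h1 := Finset.mem_range.mp hk
              have h2 := Finset.mem_Icc.not.mp hk'
              omega
            rw [hCtri k j hkj, mul_zero, zero_mul]
  constructor
  · intro h
    have h' : ∀ y : ℕ → ℝ, Tendsto y atTop (nhds 0) →
        ∃ l, Tendsto (fun n => ∑ k ∈ Finset.range (n+1), tmat d C n k * y k)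
          atTop (nhds l) := by
      intro y hy
      set x : ℕ → ℝ := fun k => ∑ i ∈ Finset.range (k+1), C k i * y i with hx
      have hAx : Tendsto (Atr r s α lam x) atTop (nhds 0) :=
        hy.congr fun n => (hAty y n).symm
      obtain ⟨l, hl⟩ := h x hAx
      exact ⟨l, hl.congr fun n => hpartial x y (fun k => rfl) n⟩
    exact ⟨toeplitz_bound _ h', toeplitz_col _ (fun n k hnk => tmat_eq_zero d C hnk) h'⟩
  · rintro ⟨⟨M, hM⟩, hcol⟩ x hx
    choose l hl using hcol
    obtain ⟨L, hL⟩ := toeplitz_backward (tmat d C) M hM l hl (Atr r s α lam x) hx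
    refine ⟨L, hL.congr fun n => ?_⟩
    exact (hpartial x (Atr r s α lam x) (fun k => (hxrec x k).symm) n).symm

/-- `d` belongs to the β-dual of `{x : Ax ∈ c₀}` — i.e. the partial
sums `Σ_{k=0}^{n} d_k·x_k` converge for every `x` with `(Ax)_n → 0` — iff
`sup_n Σ_{k=0}^{n} |t(n,k)| < ∞` and `lim_n t(n,k)` exists for each `k`. -/
theorem beta_dual_c0 (r s α : ℝ) (lam : ℕ → ℝ)
    (hr : r ≠ 0) (hsr : s + r ≠ 0) (hα : 0 < α) (hαint : ∀ m : ℤ, α ≠ (m : ℝ))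
    (hlam0 : 0 < lam 0) (hmono : StrictMono lam) (hlam : Tendsto lam atTop atTop)
    (C : ℕ → ℕ → ℝ) (hCtri : ∀ n k : ℕ, n < k → C n k = 0)
    (hAC : ∀ n k : ℕ, (∑ i ∈ Finset.range (max n k + 1), Amat r s α lam n i * C i k)
        = if n = k then 1 else 0)
    (hCA : ∀ n k : ℕ, (∑ i ∈ Finset.range (max n k + 1), C n i * Amat r s α lam i k)
        = if n = k then 1 else 0)
    (d : ℕ → ℝ) :
    (∀ x : ℕ → ℝ, Tendsto (Atr r s α lam x) atTop (nhds 0) →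
        ∃ l : ℝ, Tendsto (fun n => ∑ k ∈ Finset.range (n + 1), d k * x k) atTop (nhds l)) ↔
      ((∃ M : ℝ, ∀ n, (∑ k ∈ Finset.range (n + 1), |tmat d C n k|) ≤ M) ∧
        (∀ k, ∃ l : ℝ, Tendsto (fun n => tmat d C n k) atTop (nhds l))) := by
  exact beta_dual_c0' r s α lam C hCtri hAC hCA d
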